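/- Let T₁ and T₂ be linear subspaces of real p×p matrices of the same dimension with ρ(T₁,T₂) < 1. Then ξ(T₂) ≤ (ξ(T₁) + ρ(T₁,T₂)) / (1 − ρ(T₁,T₂)). -/

import Mathlib

open Matrix MeasureTheory
open scoped Classical

noncomputable section

namespace LVGGM

variable {p h : ℕ}

/-- Spectral norm (largest singular value) of a real square matrix. -/
def specNorm (M : Matrix (Fin p) (Fin p) ℝ) : ℝ :=
  ‖Matrix.toEuclideanCLM (𝕜 := ℝ) M‖

/-- Entrywise max norm `‖M‖_∞`. -/
def maxNorm (M : Matrix (Fin p) (Fin p) ℝ) : ℝ :=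
  ⨆ i, ⨆ j, |M i j|

/-- Entrywise ℓ₁ norm `‖M‖₁`. -/
def l1Norm (M : Matrix (Fin p) (Fin p) ℝ) : ℝ :=
  ∑ i, ∑ j, |M i j|

/-- The matrix of the orthogonal projection of ℝ^p onto the column space of `M`. -/
def colProj (M : Matrix (Fin p) (Fin p) ℝ) : Matrix (Fin p) (Fin p) ℝ :=
  LinearMap.toMatrix (EuclideanSpace.basisFun (Fin p) ℝ).toBasis
    (EuclideanSpace.basisFun (Fin p) ℝ).toBasis
    ((LinearMap.range (Matrix.toEuclideanLin M)).subtype ∘ₗ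
      (Submodule.orthogonalProjectionOnto (LinearMap.range (Matrix.toEuclideanLin M))).toLinearMap)

/-- Singular values of a matrix, as square roots of eigenvalues of `Mᴴ M`. -/
def singVals (M : Matrix (Fin p) (Fin p) ℝ) (i : Fin p) : ℝ :=
  Real.sqrt ((Matrix.posSemidef_conjTranspose_mul_self M).1.eigenvalues i)

/-! ### Sparse tangent spaces -/

/-- Tangent space to the variety of sparse matrices at `M₀`. -/
def OmegaSet (M₀ : Matrix (Fin p) (Fin p) ℝ) : Set (Matrix (Fin p) (Fin p) ℝ) :=
  {N | ∀ i j, M₀ i j = 0 → N i j = 0}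

/-- Orthogonal projection onto `OmegaSet M₀`. -/
def projOmega (M₀ N : Matrix (Fin p) (Fin p) ℝ) : Matrix (Fin p) (Fin p) ℝ :=
  Matrix.of fun i j => if M₀ i j = 0 then 0 else N i j

/-- Orthogonal projection onto the orthogonal complement of `OmegaSet M₀`. -/
def projOmegaPerp (M₀ N : Matrix (Fin p) (Fin p) ℝ) : Matrix (Fin p) (Fin p) ℝ :=
  Matrix.of fun i j => if M₀ i j = 0 then N i j else 0

/-- `μ(Ω(M₀))`: max spectral norm over the `‖·‖_∞`-unit ball of `Ω(M₀)`. -/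
def muOmega (M₀ : Matrix (Fin p) (Fin p) ℝ) : ℝ :=
  ⨆ N : {N : Matrix (Fin p) (Fin p) ℝ // N ∈ OmegaSet M₀ ∧ maxNorm N ≤ 1}, specNorm N.1

/-! ### Low-rank tangent spaces (symmetric version) -/

/-- `𝒫_{T(M)}` for symmetric `M`: `N ↦ P N + N P − P N P` with `P` the column-space projector. -/
def projTsym (M N : Matrix (Fin p) (Fin p) ℝ) : Matrix (Fin p) (Fin p) ℝ :=
  colProj M * N + N * colProj M - colProj M * N * colProj M

/-- `𝒫_{T(M)^⊥}` for symmetric `M`: `N ↦ (I−P) N (I−P)`. -/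
def projTsymPerp (M N : Matrix (Fin p) (Fin p) ℝ) : Matrix (Fin p) (Fin p) ℝ :=
  (1 - colProj M) * N * (1 - colProj M)

/-- Tangent space to the variety of symmetric low-rank matrices at symmetric `M`. -/
def TsetSym (M : Matrix (Fin p) (Fin p) ℝ) : Set (Matrix (Fin p) (Fin p) ℝ) :=
  {N | N.IsHermitian ∧ projTsymPerp M N = 0}

/-- `ξ(T(M))` (symmetric version). -/
def xiT (M : Matrix (Fin p) (Fin p) ℝ) : ℝ :=
  ⨆ N : {N : Matrix (Fin p) (Fin p) ℝ // N ∈ TsetSym M ∧ specNorm N ≤ 1}, maxNorm N.1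

/-- `ρ(T(M₁), T(M₂))` (symmetric version). -/
def rhoSym (M₁ M₂ : Matrix (Fin p) (Fin p) ℝ) : ℝ :=
  ⨆ N : {N : Matrix (Fin p) (Fin p) ℝ // specNorm N ≤ 1},
    specNorm (projTsym M₁ N.1 - projTsym M₂ N.1)

/-! ### Low-rank tangent spaces (general version) -/

/-- `𝒫_{T(M)}` for general `M`: `N ↦ P_U N + N P_V − P_U N P_V`. -/
def projTgen (M N : Matrix (Fin p) (Fin p) ℝ) : Matrix (Fin p) (Fin p) ℝ :=
  colProj M * N + N * colProj Mᵀ - colProj M * N * colProj Mᵀ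

/-- `𝒫_{T(M)^⊥}` for general `M`. -/
def projTgenPerp (M N : Matrix (Fin p) (Fin p) ℝ) : Matrix (Fin p) (Fin p) ℝ :=
  (1 - colProj M) * N * (1 - colProj Mᵀ)

/-- Tangent space to the variety of low-rank matrices at a general matrix `M`. -/
def TsetGen (M : Matrix (Fin p) (Fin p) ℝ) : Set (Matrix (Fin p) (Fin p) ℝ) :=
  {N | projTgenPerp M N = 0}

/-- `ξ(T(M))` (general version). -/
def xiGen (M : Matrix (Fin p) (Fin p) ℝ) : ℝ :=
  ⨆ N : {N : Matrix (Fin p) (Fin p) ℝ // N ∈ TsetGen M ∧ specNorm N ≤ 1}, maxNorm N.1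

/-- Euclidean norm of the `i`-th column of `P`, i.e. `‖P e_i‖`. -/
def colEucNorm (P : Matrix (Fin p) (Fin p) ℝ) (i : Fin p) : ℝ :=
  Real.sqrt (∑ j, (P j i) ^ 2)

/-- Incoherence `inc(M)` of the row/column spaces of `M`. -/
def inc (M : Matrix (Fin p) (Fin p) ℝ) : ℝ :=
  max (⨆ i, colEucNorm (colProj M) i) (⨆ i, colEucNorm (colProj Mᵀ) i)

/-! ### Orthogonal projections onto arbitrary subspaces of matrices -/

/-- Matrices as vectors in the Euclidean space of entries (trace inner product). -/
def toELin : Matrix (Fin p) (Fin p) ℝ →ₗ[ℝ] EuclideanSpace ℝ (Fin p × Fin p) where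
  toFun M := WithLp.toLp 2 (fun q => M q.1 q.2)
  map_add' _ _ := rfl
  map_smul' _ _ := rfl

/-- Orthogonal projection (trace inner product) onto a subspace of matrices. -/
def matProj (T : Submodule ℝ (Matrix (Fin p) (Fin p) ℝ)) (N : Matrix (Fin p) (Fin p) ℝ) :
    Matrix (Fin p) (Fin p) ℝ :=
  Matrix.of fun i j => (Submodule.orthogonalProjectionOnto (T.map toELin) (toELin N) : EuclideanSpace ℝ (Fin p × Fin p)) (i, j)

/-- `ρ(T₁,T₂)` for arbitrary subspaces of matrices. -/
def rhoSub (T₁ T₂ : Submodule ℝ (Matrix (Fin p) (Fin p) ℝ)) : ℝ :=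
  ⨆ N : {N : Matrix (Fin p) (Fin p) ℝ // specNorm N ≤ 1},
    specNorm (matProj T₁ N.1 - matProj T₂ N.1)

/-- `ξ(T)` for an arbitrary subspace of matrices. -/
def xiSub (T : Submodule ℝ (Matrix (Fin p) (Fin p) ℝ)) : ℝ :=
  ⨆ N : {N : Matrix (Fin p) (Fin p) ℝ // N ∈ T ∧ specNorm N ≤ 1}, maxNorm N.1

/-! ### The dual norm g_γ -/

/-- `g_γ(S,L) = max(‖S‖_∞/γ, ‖L‖₂)`. -/
def gNorm (γ : ℝ) (S L : Matrix (Fin p) (Fin p) ℝ) : ℝ :=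
  max (maxNorm S / γ) (specNorm L)

/-- `g_γ(𝒜†(M)) = max(‖M‖_∞/γ, ‖M‖₂)`. -/
def gA (γ : ℝ) (M : Matrix (Fin p) (Fin p) ℝ) : ℝ :=
  max (maxNorm M / γ) (specNorm M)

/-! ### Latent-variable Fisher information setup -/

/-- `S* = K*_O`. -/
def Sstar (K : Matrix (Fin p ⊕ Fin h) (Fin p ⊕ Fin h) ℝ) : Matrix (Fin p) (Fin p) ℝ :=
  K.toBlocks₁₁

/-- `L* = K*_{O,H} (K*_H)⁻¹ K*_{H,O}`. -/
def Lstar (K : Matrix (Fin p ⊕ Fin h) (Fin p ⊕ Fin h) ℝ) : Matrix (Fin p) (Fin p) ℝ :=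
  K.toBlocks₁₂ * (K.toBlocks₂₂)⁻¹ * K.toBlocks₂₁

/-- `K̃*_O = S* − L*` (Schur complement). -/
def KtildeO (K : Matrix (Fin p ⊕ Fin h) (Fin p ⊕ Fin h) ℝ) : Matrix (Fin p) (Fin p) ℝ :=
  Sstar K - Lstar K

/-- `Σ*_O = (K̃*_O)⁻¹`. -/
def SigmaO (K : Matrix (Fin p ⊕ Fin h) (Fin p ⊕ Fin h) ℝ) : Matrix (Fin p) (Fin p) ℝ :=
  (KtildeO K)⁻¹

/-- `ψ = ‖Σ*_O‖₂`. -/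
def psi (K : Matrix (Fin p ⊕ Fin h) (Fin p ⊕ Fin h) ℝ) : ℝ :=
  specNorm (SigmaO K)

/-- Fisher information operator `ℐ*(M) = Σ*_O M Σ*_O`. -/
def Istar (K : Matrix (Fin p ⊕ Fin h) (Fin p ⊕ Fin h) ℝ) (M : Matrix (Fin p) (Fin p) ℝ) :
    Matrix (Fin p) (Fin p) ℝ :=
  SigmaO K * M * SigmaO K

/-- A nearby tangent space: `T' = T(M')` for a symmetric `M'` with the same rank as `Lst`
and `ρ(T',T(Lst)) ≤ ξ(T(Lst))/2`. -/
def Nearby (Lst M' : Matrix (Fin p) (Fin p) ℝ) : Prop :=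
  M'.IsHermitian ∧ M'.rank = Lst.rank ∧ rhoSym M' Lst ≤ xiT Lst / 2

/-- `α_Ω`. -/
def alphaOmega (K : Matrix (Fin p ⊕ Fin h) (Fin p ⊕ Fin h) ℝ) : ℝ :=
  ⨅ M : {M : Matrix (Fin p) (Fin p) ℝ // M ∈ OmegaSet (Sstar K) ∧ maxNorm M = 1},
    maxNorm (projOmega (Sstar K) (Istar K (projOmega (Sstar K) M.1)))

/-- `δ_Ω`. -/
def deltaOmega (K : Matrix (Fin p ⊕ Fin h) (Fin p ⊕ Fin h) ℝ) : ℝ :=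
  ⨆ M : {M : Matrix (Fin p) (Fin p) ℝ // M ∈ OmegaSet (Sstar K) ∧ maxNorm M = 1},
    maxNorm (projOmegaPerp (Sstar K) (Istar K (projOmega (Sstar K) M.1)))

/-- `β_Ω`. -/
def betaOmega (K : Matrix (Fin p ⊕ Fin h) (Fin p ⊕ Fin h) ℝ) : ℝ :=
  ⨆ M : {M : Matrix (Fin p) (Fin p) ℝ // M ∈ OmegaSet (Sstar K) ∧ specNorm M = 1},
    specNorm (Istar K M.1)

/-- `α_T`. -/
def alphaTC (K : Matrix (Fin p ⊕ Fin h) (Fin p ⊕ Fin h) ℝ) : ℝ :=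
  ⨅ x : {x : Matrix (Fin p) (Fin p) ℝ × Matrix (Fin p) (Fin p) ℝ //
      Nearby (Lstar K) x.1 ∧ x.2 ∈ TsetSym x.1 ∧ specNorm x.2 = 1},
    specNorm (projTsym x.1.1 (Istar K (projTsym x.1.1 x.1.2)))

/-- `δ_T`. -/
def deltaTC (K : Matrix (Fin p ⊕ Fin h) (Fin p ⊕ Fin h) ℝ) : ℝ :=
  ⨆ x : {x : Matrix (Fin p) (Fin p) ℝ × Matrix (Fin p) (Fin p) ℝ //
      Nearby (Lstar K) x.1 ∧ x.2 ∈ TsetSym x.1 ∧ specNorm x.2 = 1},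
    specNorm (projTsymPerp x.1.1 (Istar K (projTsym x.1.1 x.1.2)))

/-- `β_T`. -/
def betaTC (K : Matrix (Fin p ⊕ Fin h) (Fin p ⊕ Fin h) ℝ) : ℝ :=
  ⨆ x : {x : Matrix (Fin p) (Fin p) ℝ × Matrix (Fin p) (Fin p) ℝ //
      Nearby (Lstar K) x.1 ∧ x.2 ∈ TsetSym x.1 ∧ maxNorm x.2 = 1},
    maxNorm (Istar K x.1.2)

/-- `α = min(α_Ω, α_T)`. -/
def alphaC (K : Matrix (Fin p ⊕ Fin h) (Fin p ⊕ Fin h) ℝ) : ℝ :=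
  min (alphaOmega K) (alphaTC K)

/-- `δ = max(δ_Ω, δ_T)`. -/
def deltaC (K : Matrix (Fin p ⊕ Fin h) (Fin p ⊕ Fin h) ℝ) : ℝ :=
  max (deltaOmega K) (deltaTC K)

/-- `β = max(β_Ω, β_T)`. -/
def betaC (K : Matrix (Fin p ⊕ Fin h) (Fin p ⊕ Fin h) ℝ) : ℝ :=
  max (betaOmega K) (betaTC K)

/-! ### Probability: iid Gaussian samples and sample covariance -/

/-- The positive-semidefinite square root (the definition of `Matrix.PosSemidef.sqrt` in the
older Mathlib, which no longer provides it). -/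
def _root_.Matrix.PosSemidef.sqrt {n : Type*} [Fintype n] {A : Matrix n n ℝ}
    (hA : A.PosSemidef) : Matrix n n ℝ :=
  hA.1.eigenvectorUnitary.1 * diagonal ((↑) ∘ (√·) ∘ hA.1.eigenvalues) *
    (star hA.1.eigenvectorUnitary : Matrix n n ℝ)

/-- The joint law of `n` i.i.d. samples from `N(0, S)` on `ℝ^p`, realized by pushing forward
i.i.d. standard Gaussians through the positive-semidefinite square root of `S`. -/
def iidGaussian (n p : ℕ) (S : Matrix (Fin p) (Fin p) ℝ) : Measure (Fin n → Fin p → ℝ) :=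
  if hS : S.PosSemidef then
    (Measure.pi fun _ : Fin n => Measure.pi fun _ : Fin p =>
        ProbabilityTheory.gaussianReal 0 1).map
      (fun Z => fun i => hS.sqrt.mulVec (Z i))
  else 0

/-- Sample covariance matrix of samples `X 1, …, X n`. -/
def sampleCov {p n : ℕ} (X : Fin n → Fin p → ℝ) : Matrix (Fin p) (Fin p) ℝ :=
  (n : ℝ)⁻¹ • ∑ i, Matrix.vecMulVec (X i) (X i)

/-! ### Optimization programs -/

/-- Nuclear norm `‖M‖_*` (sum of singular values). -/
def nuclearNorm (M : Matrix (Fin p) (Fin p) ℝ) : ℝ :=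
  ((Matrix.posSemidef_conjTranspose_mul_self M).sqrt).trace

/-- Objective of the program (sdp1): `tr((S−L)Σ) − log det(S−L) + λ(γ‖S‖₁ + tr(L))`. -/
def objSDP1 (Sig : Matrix (Fin p) (Fin p) ℝ) (lam gam : ℝ)
    (S L : Matrix (Fin p) (Fin p) ℝ) : ℝ :=
  ((S - L) * Sig).trace - Real.log (S - L).det + lam * (gam * l1Norm S + L.trace)

/-- Feasibility for (sdp1): symmetric `S, L`, `S − L ≻ 0`, `L ⪰ 0`. -/
def FeasSDP1 (S L : Matrix (Fin p) (Fin p) ℝ) : Prop :=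
  S.IsHermitian ∧ L.IsHermitian ∧ (S - L).PosDef ∧ L.PosSemidef

/-- `(S,L)` is an optimum of the program (sdp1). -/
def IsOptSDP1 (Sig : Matrix (Fin p) (Fin p) ℝ) (lam gam : ℝ)
    (S L : Matrix (Fin p) (Fin p) ℝ) : Prop :=
  FeasSDP1 S L ∧ ∀ S' L', FeasSDP1 S' L' →
    objSDP1 Sig lam gam S L ≤ objSDP1 Sig lam gam S' L'

/-- Objective with the nuclear norm: `tr((S−L)Σ) − log det(S−L) + λ(γ‖S‖₁ + ‖L‖_*)`. -/
def objNuc (Sig : Matrix (Fin p) (Fin p) ℝ) (lam gam : ℝ)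
    (S L : Matrix (Fin p) (Fin p) ℝ) : ℝ :=
  ((S - L) * Sig).trace - Real.log (S - L).det + lam * (gam * l1Norm S + nuclearNorm L)

/-- Feasibility for the tangent-space constrained program: symmetric, `S ∈ Ω(Sst)`,
`L ∈ T(M')`, `S − L ≻ 0`. -/
def FeasTS (Sst M' : Matrix (Fin p) (Fin p) ℝ) (S L : Matrix (Fin p) (Fin p) ℝ) : Prop :=
  S.IsHermitian ∧ S ∈ OmegaSet Sst ∧ L ∈ TsetSym M' ∧ (S - L).PosDef

/-- Optimality for the tangent-space constrained program. -/
def IsOptTS (Sst M' Sig : Matrix (Fin p) (Fin p) ℝ) (lam gam : ℝ)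
    (S L : Matrix (Fin p) (Fin p) ℝ) : Prop :=
  FeasTS Sst M' S L ∧ ∀ S' L', FeasTS Sst M' S' L' →
    objNuc Sig lam gam S L ≤ objNuc Sig lam gam S' L'

/-- Feasibility for the unconstrained nuclear-norm program: symmetric, `S − L ≻ 0`. -/
def FeasSy (S L : Matrix (Fin p) (Fin p) ℝ) : Prop :=
  S.IsHermitian ∧ L.IsHermitian ∧ (S - L).PosDef

/-- Optimality for the unconstrained nuclear-norm program. -/
def IsOptSy (Sig : Matrix (Fin p) (Fin p) ℝ) (lam gam : ℝ)
    (S L : Matrix (Fin p) (Fin p) ℝ) : Prop :=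
  FeasSy S L ∧ ∀ S' L', FeasSy S' L' →
    objNuc Sig lam gam S L ≤ objNuc Sig lam gam S' L'

/-! ### Spectral projectors and inertia -/

/-- Orthogonal projection onto the direct sum of the eigenspaces of a symmetric matrix `A`
corresponding to eigenvalues of magnitude less than `η`. -/
def spectralProjLT (A : Matrix (Fin p) (Fin p) ℝ) (η : ℝ) : Matrix (Fin p) (Fin p) ℝ :=
  if hA : A.IsHermitian then
    ∑ i ∈ Finset.univ.filter (fun i => |hA.eigenvalues i| < η),
      Matrix.vecMulVec (fun j => hA.eigenvectorBasis i j) (fun j => hA.eigenvectorBasis i j)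
  else 0

/-- `t` is an eigenvalue of `A`. -/
def hasEigval (A : Matrix (Fin p) (Fin p) ℝ) (t : ℝ) : Prop :=
  ∃ v : Fin p → ℝ, v ≠ 0 ∧ A.mulVec v = t • v

/-- Inertia (numbers of positive, negative, and zero eigenvalues) of a symmetric matrix. -/
def inertia (M : Matrix (Fin p) (Fin p) ℝ) : ℕ × ℕ × ℕ :=
  if hM : M.IsHermitian then
    ((Finset.univ.filter fun i => 0 < hM.eigenvalues i).card,
     (Finset.univ.filter fun i => hM.eigenvalues i < 0).card,
     (Finset.univ.filter fun i => hM.eigenvalues i = 0).card)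
  else (0, 0, 0)

end LVGGM
section Statement3Aux

set_option maxHeartbeats 1000000
set_option synthInstance.maxHeartbeats 500000

open LVGGM

variable {p : ℕ}

private lemma toELin_injective : Function.Injective (toELin (p := p)) := by
  intro M N h
  ext i j
  exact congrArg (fun v : EuclideanSpace ℝ (Fin p × Fin p) => v (i, j)) h

private lemma coord_abs_le_norm {ι : Type*} [Fintype ι] [DecidableEq ι]
    (y : EuclideanSpace ℝ ι) (i : ι) : |y i| ≤ ‖y‖ := by
  have h := abs_real_inner_le_norm (EuclideanSpace.single i (1 : ℝ)) y
  simpa [EuclideanSpace.inner_single_left, EuclideanSpace.norm_single] using h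

private lemma specNorm_nonneg' (M : Matrix (Fin p) (Fin p) ℝ) : 0 ≤ specNorm M :=
  norm_nonneg _

private lemma toEuclideanCLM_apply' (M : Matrix (Fin p) (Fin p) ℝ)
    (x : EuclideanSpace ℝ (Fin p)) (i : Fin p) :
    (Matrix.toEuclideanCLM (𝕜 := ℝ) M x) i = ∑ j, M i j * x j := rfl

private lemma abs_entry_le_specNorm (M : Matrix (Fin p) (Fin p) ℝ) (i j : Fin p) :
    |M i j| ≤ specNorm M := by
  have h3 : (Matrix.toEuclideanCLM (𝕜 := ℝ) M (EuclideanSpace.single j (1 : ℝ))) i = M i j := by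
    rw [toEuclideanCLM_apply']
    simp [EuclideanSpace.single_apply]
  have h1 := coord_abs_le_norm (Matrix.toEuclideanCLM (𝕜 := ℝ) M (EuclideanSpace.single j (1:ℝ))) i
  have h2 := (Matrix.toEuclideanCLM (𝕜 := ℝ) M).le_opNorm (EuclideanSpace.single j (1 : ℝ))
  rw [EuclideanSpace.norm_single] at h2
  rw [h3] at h1
  simpa [specNorm] using h1.trans h2

private lemma frob_eq (M : Matrix (Fin p) (Fin p) ℝ) :
    ‖toELin M‖ = Real.sqrt (∑ i, ∑ j, (M i j) ^ 2) := by
  rw [EuclideanSpace.norm_eq, Fintype.sum_prod_type]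
  congr 1
  refine Finset.sum_congr rfl fun i _ => Finset.sum_congr rfl fun j _ => ?_
  rw [Real.norm_eq_abs, sq_abs]
  congr 1

private lemma specNorm_le_frob (M : Matrix (Fin p) (Fin p) ℝ) :
    specNorm M ≤ ‖toELin M‖ := by
  rw [frob_eq]
  refine ContinuousLinearMap.opNorm_le_bound _ (Real.sqrt_nonneg _) fun x => ?_
  rw [EuclideanSpace.norm_eq, EuclideanSpace.norm_eq (x := x)]
  have key : ∀ i : Fin p, ‖(Matrix.toEuclideanCLM (𝕜 := ℝ) M x) i‖ ^ 2 ≤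
      (∑ j, (M i j) ^ 2) * (∑ j, ‖x j‖ ^ 2) := by
    intro i
    rw [toEuclideanCLM_apply', Real.norm_eq_abs, sq_abs]
    have := Finset.sum_mul_sq_le_sq_mul_sq Finset.univ (fun j => M i j) (fun j => x j)
    simpa [Real.norm_eq_abs, sq_abs] using this
  calc Real.sqrt (∑ i, ‖(Matrix.toEuclideanCLM (𝕜 := ℝ) M x) i‖ ^ 2)
      ≤ Real.sqrt ((∑ i, ∑ j, (M i j) ^ 2) * (∑ j, ‖x j‖ ^ 2)) := by
        refine Real.sqrt_le_sqrt ?_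
        calc ∑ i, ‖(Matrix.toEuclideanCLM (𝕜 := ℝ) M x) i‖ ^ 2
            ≤ ∑ i, (∑ j, (M i j) ^ 2) * (∑ j, ‖x j‖ ^ 2) :=
              Finset.sum_le_sum fun i _ => key i
          _ = (∑ i, ∑ j, (M i j) ^ 2) * (∑ j, ‖x j‖ ^ 2) := by
              rw [Finset.sum_mul]
    _ = Real.sqrt (∑ i, ∑ j, (M i j) ^ 2) * Real.sqrt (∑ j, ‖x j‖ ^ 2) := by
        rw [Real.sqrt_mul (by positivity)]

private lemma toELin_matProj (T : Submodule ℝ (Matrix (Fin p) (Fin p) ℝ))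
    (N : Matrix (Fin p) (Fin p) ℝ) :
    toELin (matProj T N) =
      (Submodule.orthogonalProjectionOnto (T.map toELin) (toELin N) : EuclideanSpace ℝ (Fin p × Fin p)) := by
  ext q
  rfl

private lemma matProj_mem (T : Submodule ℝ (Matrix (Fin p) (Fin p) ℝ))
    (N : Matrix (Fin p) (Fin p) ℝ) : matProj T N ∈ T := by
  have h : toELin (matProj T N) ∈ T.map toELin := by
    rw [toELin_matProj]
    exact (Submodule.orthogonalProjectionOnto (T.map toELin) (toELin N)).2
  obtain ⟨m, hm, hme⟩ := h
  have h' := toELin_injective hme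
  exact h' ▸ hm

private lemma matProj_eq_self (T : Submodule ℝ (Matrix (Fin p) (Fin p) ℝ))
    {N : Matrix (Fin p) (Fin p) ℝ} (hN : N ∈ T) : matProj T N = N := by
  apply toELin_injective
  rw [toELin_matProj]
  have hN' : toELin N ∈ T.map toELin := Submodule.mem_map_of_mem hN
  have := Submodule.orthogonalProjectionOnto_mem_subspace_eq_self (K := T.map toELin) ⟨toELin N, hN'⟩
  rw [show ((⟨toELin N, hN'⟩ : T.map toELin) : EuclideanSpace ℝ (Fin p × Fin p)) = toELin N from rfl] at this
  rw [this]

private lemma norm_toELin_matProj_le (T : Submodule ℝ (Matrix (Fin p) (Fin p) ℝ))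
    (N : Matrix (Fin p) (Fin p) ℝ) : ‖toELin (matProj T N)‖ ≤ ‖toELin N‖ := by
  rw [toELin_matProj]
  calc ‖(Submodule.orthogonalProjectionOnto (T.map toELin) (toELin N) : EuclideanSpace ℝ (Fin p × Fin p))‖
      = ‖Submodule.orthogonalProjectionOnto (T.map toELin) (toELin N)‖ := rfl
    _ ≤ ‖Submodule.orthogonalProjectionOnto (T.map toELin)‖ * ‖toELin N‖ :=
        (Submodule.orthogonalProjectionOnto (T.map toELin)).le_opNorm _
    _ ≤ 1 * ‖toELin N‖ :=
        mul_le_mul_of_nonneg_right (Submodule.orthogonalProjectionOnto_norm_le _) (norm_nonneg _)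
    _ = ‖toELin N‖ := one_mul _

private lemma toEuclideanCLM_smul (c : ℝ) (M : Matrix (Fin p) (Fin p) ℝ) :
    Matrix.toEuclideanCLM (𝕜 := ℝ) (c • M) = c • Matrix.toEuclideanCLM (𝕜 := ℝ) M := by
  refine ContinuousLinearMap.ext fun x => ?_
  ext i
  rw [toEuclideanCLM_apply']
  have hr : (c • Matrix.toEuclideanCLM (𝕜 := ℝ) M) x i
      = c * ((Matrix.toEuclideanCLM (𝕜 := ℝ) M) x) i := rfl
  rw [hr, toEuclideanCLM_apply', Finset.mul_sum]
  refine Finset.sum_congr rfl fun j _ => ?_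
  have hs : (c • M) i j = c * M i j := rfl
  rw [hs]
  ring

private lemma specNorm_smul (c : ℝ) (M : Matrix (Fin p) (Fin p) ℝ) :
    specNorm (c • M) = |c| * specNorm M := by
  unfold specNorm
  rw [toEuclideanCLM_smul, ← Real.norm_eq_abs]
  exact norm_smul c (Matrix.toEuclideanCLM (𝕜 := ℝ) M : EuclideanSpace ℝ (Fin p) →L[ℝ] EuclideanSpace ℝ (Fin p))

private lemma specNorm_add_le (A B : Matrix (Fin p) (Fin p) ℝ) :
    specNorm (A + B) ≤ specNorm A + specNorm B := by
  unfold specNorm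
  rw [map_add]
  exact norm_add_le _ _

private lemma specNorm_sub_rev (A B : Matrix (Fin p) (Fin p) ℝ) :
    specNorm (A - B) = specNorm (B - A) := by
  unfold specNorm
  rw [map_sub, map_sub, norm_sub_rev]

private lemma specNorm_zero : specNorm (0 : Matrix (Fin p) (Fin p) ℝ) = 0 := by
  unfold specNorm
  rw [map_zero, norm_zero]

private lemma maxNorm_nonneg' (M : Matrix (Fin p) (Fin p) ℝ) : 0 ≤ maxNorm M :=
  Real.iSup_nonneg fun _ => Real.iSup_nonneg fun _ => abs_nonneg _

private lemma maxNorm_le' {M : Matrix (Fin p) (Fin p) ℝ} {a : ℝ} (ha : 0 ≤ a)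
    (h : ∀ i j, |M i j| ≤ a) : maxNorm M ≤ a :=
  Real.iSup_le (fun i => Real.iSup_le (fun j => h i j) ha) ha

private lemma abs_le_maxNorm (M : Matrix (Fin p) (Fin p) ℝ) (i j : Fin p) :
    |M i j| ≤ maxNorm M := by
  have h1 : |M i j| ≤ ⨆ j, |M i j| :=
    le_ciSup (f := fun j => |M i j|) (Finite.bddAbove_range _) j
  exact h1.trans (le_ciSup (f := fun i => ⨆ j, |M i j|) (Finite.bddAbove_range _) i)

private lemma maxNorm_le_specNorm (M : Matrix (Fin p) (Fin p) ℝ) :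
    maxNorm M ≤ specNorm M :=
  maxNorm_le' (specNorm_nonneg' M) (abs_entry_le_specNorm M)

private lemma xiSub_nonneg (T : Submodule ℝ (Matrix (Fin p) (Fin p) ℝ)) : 0 ≤ xiSub T :=
  Real.iSup_nonneg fun _ => maxNorm_nonneg' _

private lemma le_xiSub (T : Submodule ℝ (Matrix (Fin p) (Fin p) ℝ))
    {N : Matrix (Fin p) (Fin p) ℝ} (hN : N ∈ T) (h1 : specNorm N ≤ 1) :
    maxNorm N ≤ xiSub T := by
  refine le_ciSup (f := fun (N : {N : Matrix (Fin p) (Fin p) ℝ // N ∈ T ∧ specNorm N ≤ 1}) =>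
    maxNorm N.1) ⟨1, ?_⟩ ⟨N, hN, h1⟩
  rintro x ⟨N', rfl⟩
  exact (maxNorm_le_specNorm _).trans N'.2.2

private lemma maxNorm_le_xiSub_mul (T : Submodule ℝ (Matrix (Fin p) (Fin p) ℝ))
    {M : Matrix (Fin p) (Fin p) ℝ} {c : ℝ} (hM : M ∈ T) (hc : 0 < c)
    (h : specNorm M ≤ c) : maxNorm M ≤ xiSub T * c := by
  have hM' : c⁻¹ • M ∈ T := T.smul_mem _ hM
  have hs : specNorm (c⁻¹ • M) ≤ 1 := by
    rw [specNorm_smul, abs_of_nonneg (inv_nonneg.2 hc.le)]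
    calc c⁻¹ * specNorm M ≤ c⁻¹ * c :=
          mul_le_mul_of_nonneg_left h (inv_nonneg.2 hc.le)
      _ = 1 := inv_mul_cancel₀ hc.ne'
  have hx := le_xiSub T hM' hs
  have hmain : maxNorm M ≤ c * maxNorm (c⁻¹ • M) := by
    refine maxNorm_le' (mul_nonneg hc.le (maxNorm_nonneg' _)) fun i j => ?_
    have h1 : |(c⁻¹ • M) i j| ≤ maxNorm (c⁻¹ • M) := abs_le_maxNorm _ i j
    have h2 : (c⁻¹ • M) i j = c⁻¹ * M i j := rfl
    have h3 : |M i j| = c * |(c⁻¹ • M) i j| := by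
      rw [h2, abs_mul, abs_of_nonneg (inv_nonneg.2 hc.le), ← mul_assoc,
        mul_inv_cancel₀ hc.ne', one_mul]
    rw [h3]
    exact mul_le_mul_of_nonneg_left h1 hc.le
  calc maxNorm M ≤ c * maxNorm (c⁻¹ • M) := hmain
    _ ≤ c * xiSub T := mul_le_mul_of_nonneg_left hx hc.le
    _ = xiSub T * c := mul_comm _ _

private lemma rhoSub_nonneg (T₁ T₂ : Submodule ℝ (Matrix (Fin p) (Fin p) ℝ)) :
    0 ≤ rhoSub T₁ T₂ :=
  Real.iSup_nonneg fun _ => specNorm_nonneg' _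

private lemma frob_le_spec (N : Matrix (Fin p) (Fin p) ℝ) :
    ‖toELin N‖ ≤ p * specNorm N := by
  rw [frob_eq]
  have hb : ∑ i, ∑ j, (N i j) ^ 2 ≤ ((p : ℝ) * specNorm N) ^ 2 := by
    calc ∑ i, ∑ j, (N i j) ^ 2 ≤ ∑ _i : Fin p, ∑ _j : Fin p, (specNorm N) ^ 2 := by
          refine Finset.sum_le_sum fun i _ => Finset.sum_le_sum fun j _ => ?_
          have h := abs_entry_le_specNorm N i j
          calc (N i j) ^ 2 = |N i j| ^ 2 := (sq_abs _).symm
            _ ≤ (specNorm N) ^ 2 := pow_le_pow_left₀ (abs_nonneg _) h 2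
      _ = ((p : ℝ) * (p : ℝ)) * (specNorm N) ^ 2 := by
          simp [Finset.sum_const, Finset.card_univ]
          ring
      _ = ((p : ℝ) * specNorm N) ^ 2 := by ring
  calc Real.sqrt (∑ i, ∑ j, (N i j) ^ 2) ≤ Real.sqrt (((p : ℝ) * specNorm N) ^ 2) :=
        Real.sqrt_le_sqrt hb
    _ = (p : ℝ) * specNorm N := Real.sqrt_sq (mul_nonneg (Nat.cast_nonneg _) (specNorm_nonneg' _))

private lemma specNorm_matProj_le (T : Submodule ℝ (Matrix (Fin p) (Fin p) ℝ))
    (N : Matrix (Fin p) (Fin p) ℝ) : specNorm (matProj T N) ≤ ‖toELin N‖ :=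
  (specNorm_le_frob _).trans (norm_toELin_matProj_le T N)

private lemma le_rhoSub (T₁ T₂ : Submodule ℝ (Matrix (Fin p) (Fin p) ℝ))
    {N : Matrix (Fin p) (Fin p) ℝ} (h1 : specNorm N ≤ 1) :
    specNorm (matProj T₁ N - matProj T₂ N) ≤ rhoSub T₁ T₂ := by
  refine le_ciSup (f := fun (N : {N : Matrix (Fin p) (Fin p) ℝ // specNorm N ≤ 1}) =>
    specNorm (matProj T₁ N.1 - matProj T₂ N.1)) ⟨2 * p, ?_⟩ ⟨N, h1⟩
  rintro x ⟨N', rfl⟩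
  have hf : ‖toELin N'.1‖ ≤ (p : ℝ) * specNorm N'.1 := frob_le_spec _
  have hp : (p : ℝ) * specNorm N'.1 ≤ p :=
    (mul_le_of_le_one_right (Nat.cast_nonneg _) N'.2)
  have h₁ : specNorm (matProj T₁ N'.1) ≤ (p : ℝ) := (specNorm_matProj_le _ _).trans (hf.trans hp)
  have h₂ : specNorm (matProj T₂ N'.1) ≤ (p : ℝ) := (specNorm_matProj_le _ _).trans (hf.trans hp)
  have := specNorm_add_le (matProj T₁ N'.1) (-(matProj T₂ N'.1))
  have hneg : specNorm (-(matProj T₂ N'.1)) = specNorm (matProj T₂ N'.1) := by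
    have : -(matProj T₂ N'.1) = (0 : Matrix (Fin p) (Fin p) ℝ) - matProj T₂ N'.1 := by
      rw [zero_sub]
    rw [this, specNorm_sub_rev, sub_zero]
  rw [← sub_eq_add_neg, hneg] at this
  linarith

end Statement3Aux

/-- if `T₁, T₂` are subspaces of matrices of the same dimension with
`ρ(T₁,T₂) < 1`, then `ξ(T₂) ≤ (ξ(T₁)+ρ(T₁,T₂))/(1−ρ(T₁,T₂))`. -/
theorem statement_3 {p : ℕ} (T₁ T₂ : Submodule ℝ (Matrix (Fin p) (Fin p) ℝ))
    (hdim : Module.finrank ℝ T₁ = Module.finrank ℝ T₂)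
    (hρ : LVGGM.rhoSub T₁ T₂ < 1) :
    LVGGM.xiSub T₂ ≤ (LVGGM.xiSub T₁ + LVGGM.rhoSub T₁ T₂) / (1 - LVGGM.rhoSub T₁ T₂) := by
  classical
  set ρ := LVGGM.rhoSub T₁ T₂ with hρdef
  set ξ₁ := LVGGM.xiSub T₁ with hξdef
  have hρ0 : 0 ≤ ρ := rhoSub_nonneg T₁ T₂
  have hξ0 : 0 ≤ ξ₁ := xiSub_nonneg T₁
  have hρ1 : 0 < 1 - ρ := by linarith
  have key : LVGGM.xiSub T₂ ≤ ξ₁ * (1 + ρ) + ρ := by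
    have hne : Nonempty {N : Matrix (Fin p) (Fin p) ℝ // N ∈ T₂ ∧ LVGGM.specNorm N ≤ 1} :=
      ⟨⟨0, T₂.zero_mem, by rw [specNorm_zero]; norm_num⟩⟩
    refine Real.iSup_le (fun x => ?_) (by nlinarith)
    obtain ⟨N, hN, h1⟩ := x
    set P := LVGGM.matProj T₁ N with hPdef
    have hPmem : P ∈ T₁ := matProj_mem T₁ N
    have hPN : LVGGM.matProj T₂ N = N := matProj_eq_self T₂ hN
    have hdiff0 : LVGGM.specNorm (P - N) ≤ ρ := by
      have h := le_rhoSub T₁ T₂ h1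
      rwa [hPN] at h
    have hdiff : LVGGM.specNorm (N - P) ≤ ρ := by
      rwa [specNorm_sub_rev]
    have hPspec : LVGGM.specNorm P ≤ 1 + ρ := by
      have hPe : N + (P - N) = P := by abel
      calc LVGGM.specNorm P = LVGGM.specNorm (N + (P - N)) := by rw [hPe]
        _ ≤ LVGGM.specNorm N + LVGGM.specNorm (P - N) := specNorm_add_le _ _
        _ ≤ 1 + ρ := add_le_add h1 hdiff0
    have hPmax : LVGGM.maxNorm P ≤ ξ₁ * (1 + ρ) :=
      maxNorm_le_xiSub_mul T₁ hPmem (by linarith) hPspec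
    have hrest : LVGGM.maxNorm (N - P) ≤ ρ := (maxNorm_le_specNorm _).trans hdiff
    have htri : LVGGM.maxNorm N ≤ LVGGM.maxNorm P + LVGGM.maxNorm (N - P) := by
      refine maxNorm_le' (add_nonneg (maxNorm_nonneg' _) (maxNorm_nonneg' _)) fun i j => ?_
      have hsplit : N i j = P i j + (N - P) i j := by
        rw [Matrix.sub_apply]; ring
      rw [hsplit]
      exact (abs_add_le _ _).trans (add_le_add (abs_le_maxNorm _ _ _) (abs_le_maxNorm _ _ _))
    calc LVGGM.maxNorm N ≤ LVGGM.maxNorm P + LVGGM.maxNorm (N - P) := htri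
      _ ≤ ξ₁ * (1 + ρ) + ρ := add_le_add hPmax hrest
  refine key.trans ?_
  rw [le_div_iff₀ hρ1]
  nlinarith [mul_nonneg (mul_nonneg hξ0 hρ0) hρ0, mul_nonneg hρ0 hρ0]
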